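/- Let ℓ_n be even and consider a uniform random perfect matching (pairing) of ℓ_n half-edges, among which n₁ half-edges are 'degree-1' half-edges (each belonging to a distinct vertex of degree 1). The probability that no two degree-1 half-edges are paired together equals ∏_{i=1}^{n₁} (ℓ_n - n₁ - i + 1)/(ℓ_n - 2i + 1), and if n₁²/ℓ_n → λ ∈ [0,∞) while n₁/ℓ_n → 0, this probability converges to e^{-λ/2}. -/

import Mathlib

open Filter

/-- A perfect matching (pairing) of `ℓ` half-edges: a fixed-point-free involution. -/
def IsPairing {ℓ : ℕ} (f : Equiv.Perm (Fin ℓ)) : Prop :=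
  (∀ x, f x ≠ x) ∧ ∀ x, f (f x) = x

/-- The half-edges labelled `0, …, n₁ - 1` are the degree-1 half-edges; this is the event
that no two of them are paired together. -/
def NoDegreeOnePair {ℓ : ℕ} (n₁ : ℕ) (f : Equiv.Perm (Fin ℓ)) : Prop :=
  ∀ x : Fin ℓ, (x : ℕ) < n₁ → ¬ ((f x : ℕ) < n₁)

/-- Generalized pairing of a finite type avoiding pairs inside `q`. -/
def GP {α : Type*} (q : α → Prop) (f : Equiv.Perm α) : Prop :=
  (∀ x, f x ≠ x) ∧ (∀ x, f (f x) = x) ∧ ∀ x, q x → ¬ q (f x)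

section Transport

variable {α : Type*} [Fintype α] [DecidableEq α]

omit [Fintype α] [DecidableEq α] in
lemma GP_permCongr {β : Type*} (e : α ≃ β) {q : α → Prop} {q' : β → Prop}
    (hq : ∀ x, q x ↔ q' (e x)) {f : Equiv.Perm α} (hf : GP q f) :
    GP q' (e.permCongr f) := by
  obtain ⟨h1, h2, h3⟩ := hf
  refine ⟨fun y hy => ?_, fun y => ?_, fun y hy hy' => ?_⟩
  · simp only [Equiv.permCongr_apply] at hy
    exact h1 (e.symm y) (by rw [← e.symm_apply_apply (f (e.symm y)), hy])
  · simp [Equiv.permCongr_apply, h2]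
  · simp only [Equiv.permCongr_apply] at hy'
    rw [← e.apply_symm_apply y, ← hq] at hy
    rw [← hq] at hy'
    exact h3 _ hy hy'

omit [Fintype α] [DecidableEq α] in
lemma GP_card_congr {β : Type*} (e : α ≃ β)
    {q : α → Prop} {q' : β → Prop} (hq : ∀ x, q x ↔ q' (e x)) :
    Nat.card {f : Equiv.Perm α // GP q f} = Nat.card {f : Equiv.Perm β // GP q' f} := by
  apply Nat.card_congr
  refine (e.permCongr).subtypeEquiv fun f => ⟨fun h => GP_permCongr e hq h, fun h => ?_⟩
  have hq' : ∀ y, q' y ↔ q (e.symm y) := fun y => by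
    rw [hq (e.symm y), e.apply_symm_apply]
  have := GP_permCongr e.symm (fun y => hq' y) h
  convert this using 1
  ext x
  simp [Equiv.permCongr_apply]

omit [Fintype α] in
lemma fiber_card (q : α → Prop) (a b : α) (hab : a ≠ b) (hq : ¬(q a ∧ q b)) :
    Nat.card {f : Equiv.Perm α // GP q f ∧ f a = b}
      = Nat.card {f : Equiv.Perm {x : α // ¬(x = a ∨ x = b)} // GP (fun x => q x.1) f} := by
  classical
  have key : ∀ (f : Equiv.Perm α), GP q f → f a = b →
      ∀ x, ¬(x = a ∨ x = b) ↔ ¬(f x = a ∨ f x = b) := by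
    intro f hf hfa x
    have hba : f b = a := by rw [← hfa, hf.2.1]
    have h1 : f x = a ↔ x = b :=
      ⟨fun h => f.injective (h.trans hba.symm), fun h => h ▸ hba⟩
    have h2 : f x = b ↔ x = a :=
      ⟨fun h => f.injective (h.trans hfa.symm), fun h => h ▸ hfa⟩
    rw [not_iff_not, h1, h2, or_comm]
  have hpa : (a = a ∨ a = b) := Or.inl rfl
  have hpb : (b = a ∨ b = b) := Or.inr rfl
  set ext : Equiv.Perm {x : α // ¬(x = a ∨ x = b)} → Equiv.Perm α := fun g =>
    Equiv.Perm.subtypeCongr (Equiv.swap ⟨a, hpa⟩ ⟨b, hpb⟩) g with hext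
  have hexta : ∀ g, ext g a = b := fun g => by
    rw [hext]
    rw [Equiv.Perm.subtypeCongr.left_apply (p := fun x => x = a ∨ x = b) _ _ hpa,
      Equiv.swap_apply_left]
  have hextb : ∀ g, ext g b = a := fun g => by
    rw [hext]
    rw [Equiv.Perm.subtypeCongr.left_apply (p := fun x => x = a ∨ x = b) _ _ hpb,
      Equiv.swap_apply_right]
  have hextn : ∀ g x (hx : ¬(x = a ∨ x = b)), ext g x = (g ⟨x, hx⟩).1 := fun g x hx => by
    rw [hext]
    rw [Equiv.Perm.subtypeCongr.right_apply (p := fun x => x = a ∨ x = b) _ _ hx]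
  apply Nat.card_congr
  refine ⟨fun F => ⟨F.1.subtypePerm (fun x => (key F.1 F.2.1 F.2.2 x).symm), ?_, ?_, ?_⟩,
          fun g => ⟨ext g.1, ⟨?_, ?_, ?_⟩, hexta g.1⟩, ?_, ?_⟩
  · rintro ⟨x, hx⟩ h
    exact F.2.1.1 x (congrArg Subtype.val h)
  · rintro ⟨x, hx⟩
    exact Subtype.ext (F.2.1.2.1 x)
  · rintro ⟨x, hx⟩ h h'
    exact F.2.1.2.2 x h h'
  · intro x
    by_cases hx : x = a ∨ x = b
    · rcases hx with rfl | rfl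
      · rw [hexta]; exact hab.symm
      · rw [hextb]; exact hab
    · rw [hextn g.1 x hx]
      intro h
      exact g.2.1 ⟨x, hx⟩ (Subtype.ext h)
  · intro x
    by_cases hx : x = a ∨ x = b
    · rcases hx with rfl | rfl
      · rw [hexta, hextb]
      · rw [hextb, hexta]
    · rw [hextn g.1 x hx, hextn g.1 _ (g.1 ⟨x, hx⟩).2, Subtype.coe_eta, g.2.2.1]
  · intro x hqx
    by_cases hx : x = a ∨ x = b
    · rcases hx with rfl | rfl
      · rw [hexta]; exact fun h => hq ⟨hqx, h⟩
      · rw [hextb]; exact fun h => hq ⟨h, hqx⟩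
    · rw [hextn g.1 x hx]
      exact g.2.2.2 ⟨x, hx⟩ hqx
  · rintro ⟨f, hf, hfa⟩
    apply Subtype.ext
    apply Equiv.ext
    intro x
    by_cases hxa : x = a
    · rw [hxa, hexta, hfa]
    · by_cases hxb : x = b
      · have hfb : f b = a := by rw [← hfa, hf.2.1]
        rw [hxb, hextb, hfb]
      · rw [hextn _ x (by tauto)]
        rfl
  · rintro ⟨g, hg⟩
    apply Subtype.ext
    apply Equiv.ext
    rintro ⟨x, hx⟩
    apply Subtype.ext
    change ext g x = _
    rw [hextn g x hx]

lemma key_gen (q : α → Prop) (a : α) (P : α → Prop) [DecidablePred P]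
    (hP : ∀ f : Equiv.Perm α, GP q f → P (f a)) :
    Nat.card {f : Equiv.Perm α // GP q f}
      = ∑ b : {b // P b}, Nat.card {f : Equiv.Perm α // GP q f ∧ f a = b.1} := by
  classical
  have e : {f : Equiv.Perm α // GP q f}
      ≃ Σ b : {b // P b}, {f : Equiv.Perm α // GP q f ∧ f a = b.1} :=
    { toFun := fun f => ⟨⟨f.1 a, hP f.1 f.2⟩, ⟨f.1, f.2, rfl⟩⟩
      invFun := fun x => ⟨x.2.1, x.2.2.1⟩
      left_inv := fun f => rfl
      right_inv := by
        rintro ⟨⟨b, hb⟩, f, hf, hfa⟩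
        have : f a = b := hfa
        subst this
        rfl }
  rw [Nat.card_congr e, Nat.card_eq_fintype_card, Fintype.card_sigma]
  exact Finset.sum_congr rfl fun b _ => (Nat.card_eq_fintype_card).symm

omit [DecidableEq α] in
lemma exists_good_equiv (q : α → Prop) [DecidablePred q] :
    ∃ e : α ≃ Fin (Fintype.card α),
      ∀ x, q x ↔ (e x : ℕ) < Fintype.card {x // q x} := by
  classical
  have hkm : Fintype.card {x // q x} + Fintype.card {x // ¬ q x} = Fintype.card α := by
    rw [← Fintype.card_sum]
    exact Fintype.card_congr (Equiv.sumCompl q)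
  refine ⟨((Equiv.sumCompl q).symm.trans
      ((Fintype.equivFin _).sumCongr (Fintype.equivFin _))).trans
      (finSumFinEquiv.trans (finCongr hkm)), fun x => ?_⟩
  by_cases hx : q x
  · simp only [Equiv.trans_apply, Equiv.sumCompl_symm_apply_of_pos hx,
      Equiv.sumCongr_apply, Sum.map_inl, finSumFinEquiv_apply_left, finCongr_apply,
      Fin.coe_cast, Fin.coe_castAdd]
    exact iff_of_true hx (Fin.isLt _)
  · simp only [Equiv.trans_apply, Equiv.sumCompl_symm_apply_of_neg hx,
      Equiv.sumCongr_apply, Sum.map_inr, finSumFinEquiv_apply_right, finCongr_apply,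
      Fin.coe_cast, Fin.coe_natAdd]
    exact iff_of_false hx (by omega)

lemma card_compl_pair (a b : α) (hab : a ≠ b) :
    Fintype.card {x : α // ¬(x = a ∨ x = b)} = Fintype.card α - 2 := by
  classical
  rw [Fintype.card_subtype_compl]
  congr 1
  rw [Fintype.card_subtype]
  have : Finset.univ.filter (fun x => x = a ∨ x = b) = {a, b} := by
    ext z; simp
  rw [this, Finset.card_pair hab]

lemma card_q_compl_pair (q : α → Prop) [DecidablePred q] (a b : α)
    (ha : q a) (hb : ¬ q b) :
    Fintype.card {x : {x : α // ¬(x = a ∨ x = b)} // q x.1}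
      = Fintype.card {x : α // q x} - 1 := by
  classical
  have e : {x : {x : α // ¬(x = a ∨ x = b)} // q x.1} ≃ {x : α // q x ∧ ¬(x = a)} :=
    (Equiv.subtypeSubtypeEquivSubtypeInter _ _).trans
      (Equiv.subtypeEquivRight (fun x => by
        constructor
        · rintro ⟨hx, hqx⟩; exact ⟨hqx, fun h => hx (Or.inl h)⟩
        · rintro ⟨hqx, hxa⟩
          exact ⟨fun h => by rcases h with h | h; exact hxa h; exact hb (h ▸ hqx), hqx⟩))
  rw [Fintype.card_congr e, Fintype.card_subtype, Fintype.card_subtype]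
  have : Finset.univ.filter (fun x => q x ∧ ¬(x = a)) = (Finset.univ.filter q).erase a := by
    ext z; simp [and_comm]
  rw [this, Finset.card_erase_of_mem (by simp [ha])]

end Transport

lemma card_fin_lt (L K : ℕ) (h : K ≤ L) :
    Fintype.card {x : Fin L // (x : ℕ) < K} = K := by
  have e : {x : Fin L // (x : ℕ) < K} ≃ Fin K :=
    { toFun := fun x => ⟨x.1, x.2⟩
      invFun := fun y => ⟨⟨y.1, lt_of_lt_of_le y.2 h⟩, y.2⟩
      left_inv := fun x => rfl
      right_inv := fun y => rfl }
  rw [Fintype.card_congr e, Fintype.card_fin]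

/-- number of pairings of `Fin L` with no pair inside the first `K` elements -/
noncomputable def cnt (L K : ℕ) : ℕ :=
  Nat.card {f : Equiv.Perm (Fin L) // GP (fun x : Fin L => (x : ℕ) < K) f}

lemma cnt_def (L K : ℕ) :
    cnt L K = Nat.card {f : Equiv.Perm (Fin L) // GP (fun x : Fin L => (x : ℕ) < K) f} :=
  rfl

lemma card_GP_eq_cnt {α : Type*} [Fintype α] [DecidableEq α] (q : α → Prop) [DecidablePred q] :
    Nat.card {f : Equiv.Perm α // GP q f}
      = cnt (Fintype.card α) (Fintype.card {x // q x}) := by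
  obtain ⟨e, he⟩ := exists_good_equiv q
  exact GP_card_congr e he

lemma cnt_zero (K : ℕ) : cnt 0 K = 1 := by
  rw [cnt, Nat.card_congr (Equiv.subtypeUnivEquiv
    (fun f => ⟨fun x => x.elim0, fun x => x.elim0, fun x => x.elim0⟩)),
    Nat.card_eq_fintype_card]
  simp

lemma cnt_succ (L K : ℕ) (hK : K + 1 ≤ L) :
    cnt L (K + 1) = (L - (K + 1)) * cnt (L - 2) K := by
  have hL : 0 < L := lt_of_lt_of_le (Nat.succ_pos K) hK
  set q : Fin L → Prop := fun x => (x : ℕ) < K + 1 with hqdef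
  set a : Fin L := ⟨0, hL⟩ with hadef
  have ha : q a := Nat.succ_pos K
  rw [cnt, key_gen q a (fun b => ¬ q b) (fun f hf => hf.2.2 a ha)]
  have hfib : ∀ b : {b : Fin L // ¬ q b},
      Nat.card {f : Equiv.Perm (Fin L) // GP q f ∧ f a = b.1} = cnt (L - 2) K := by
    rintro ⟨b, hb⟩
    have hab : a ≠ b := fun h => hb (h ▸ ha)
    rw [fiber_card q a b hab (fun h => hb h.2), card_GP_eq_cnt]
    rw [card_compl_pair a b hab, Fintype.card_fin,
      card_q_compl_pair q a b ha hb, card_fin_lt L (K + 1) hK, Nat.add_sub_cancel]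
  rw [Finset.sum_congr rfl (fun b _ => hfib b), Finset.sum_const, Finset.card_univ,
    smul_eq_mul]
  congr 1
  rw [Fintype.card_subtype_compl, Fintype.card_fin, card_fin_lt L (K + 1) hK]

lemma cnt_zero_rec (L : ℕ) (hL : 0 < L) :
    cnt L 0 = (L - 1) * cnt (L - 2) 0 := by
  set q : Fin L → Prop := fun x => (x : ℕ) < 0 with hqdef
  set a : Fin L := ⟨0, hL⟩ with hadef
  rw [cnt, key_gen q a (fun b => ¬ b = a) (fun f hf h => hf.1 a h)]
  have hfib : ∀ b : {b : Fin L // ¬ b = a},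
      Nat.card {f : Equiv.Perm (Fin L) // GP q f ∧ f a = b.1} = cnt (L - 2) 0 := by
    rintro ⟨b, hb⟩
    have hab : a ≠ b := fun h => hb h.symm
    rw [fiber_card q a b hab (fun h => Nat.not_lt_zero _ h.1), card_GP_eq_cnt]
    rw [card_compl_pair a b hab, Fintype.card_fin]
    congr 1
    rw [Fintype.card_eq_zero_iff]
    exact ⟨fun x => Nat.not_lt_zero _ x.2⟩
  rw [Finset.sum_congr rfl (fun b _ => hfib b), Finset.sum_const, Finset.card_univ,
    smul_eq_mul]
  congr 1
  rw [Fintype.card_subtype_compl, Fintype.card_fin, Fintype.card_subtype_eq]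

lemma cnt_pos_aux : ∀ m, 0 < cnt (2 * m) 0 := by
  intro m
  induction m with
  | zero => simp [cnt_zero]
  | succ k ih =>
    have h2 : 2 * (k + 1) - 2 = 2 * k := by omega
    rw [cnt_zero_rec (2 * (k + 1)) (by omega), h2]
    exact Nat.mul_pos (by omega) ih

lemma cnt_pos' (L : ℕ) (h : Even L) : 0 < cnt L 0 := by
  obtain ⟨m, rfl⟩ := h
  have := cnt_pos_aux m
  rwa [two_mul] at this

lemma even_sub_two' {L : ℕ} (h : Even L) : Even (L - 2) := by
  obtain ⟨m, rfl⟩ := h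
  exact ⟨m - 1, by omega⟩

lemma cnt_ratio : ∀ K L, Even L → 2 * K ≤ L →
    (cnt L K : ℝ) / (cnt L 0 : ℝ)
      = ∏ i ∈ Finset.range K, (((L : ℝ) - K - i) / ((L : ℝ) - 2 * i - 1)) := by
  intro K
  induction K with
  | zero =>
    intro L hE _
    rw [Finset.range_zero, Finset.prod_empty]
    exact div_self (by exact_mod_cast (cnt_pos' L hE).ne')
  | succ K ih =>
    intro L hE h
    have hL2 : 2 ≤ L := by omega
    have hKL : K + 1 ≤ L := by omega
    have c1 : ((L - (K + 1) : ℕ) : ℝ) = (L : ℝ) - (K + 1) := by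
      rw [Nat.cast_sub hKL]; push_cast; ring
    have c2 : ((L - 1 : ℕ) : ℝ) = (L : ℝ) - 1 := by
      rw [Nat.cast_sub (by omega)]; norm_num
    have c3 : ((L - 2 : ℕ) : ℝ) = (L : ℝ) - 2 := by
      rw [Nat.cast_sub hL2]; norm_num
    rw [cnt_succ L K hKL, cnt_zero_rec L (by omega), Nat.cast_mul, Nat.cast_mul,
      mul_div_mul_comm, ih (L - 2) (even_sub_two' hE) (by omega),
      Finset.prod_range_succ', mul_comm]
    congr 1
    · apply Finset.prod_congr rfl
      intro i _
      rw [c3]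
      push_cast
      ring_nf
    · rw [c1, c2]
      push_cast
      ring_nf

/-! ### Analysis -/

lemma gauss_real (K : ℕ) : ∑ i ∈ Finset.range K, (i : ℝ) = ((K : ℝ) ^ 2 - K) / 2 := by
  induction K with
  | zero => simp
  | succ k ih =>
    rw [Finset.sum_range_succ, ih]
    push_cast
    ring

lemma sum_a (K : ℕ) : ∑ i ∈ Finset.range K, ((K : ℝ) - 1 - i) = ((K : ℝ) ^ 2 - K) / 2 := by
  rw [Finset.sum_sub_distrib, Finset.sum_const, Finset.card_range, gauss_real]
  ring

lemma fact_upper (x : ℝ) : 1 - x ≤ Real.exp (-x) := by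
  have := Real.add_one_le_exp (-x); linarith

lemma fact_lower {a D : ℝ} (ha : 0 ≤ a) (h : a < D) :
    Real.exp (-(a / (D - a))) ≤ 1 - a / D := by
  have hDa : 0 < D - a := by linarith
  have hD : 0 < D := lt_of_le_of_lt ha h
  have h1 : 1 + a / (D - a) = D / (D - a) := by field_simp; ring
  have h2 : Real.exp (-(a / (D - a))) ≤ 1 / (1 + a / (D - a)) := by
    rw [Real.exp_neg, ← one_div]
    have := Real.add_one_le_exp (a / (D - a))
    have hy : 0 ≤ a / (D - a) := div_nonneg ha hDa.le
    exact one_div_le_one_div_of_le (by positivity) (by linarith)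
  calc Real.exp (-(a / (D - a))) ≤ 1 / (1 + a / (D - a)) := h2
    _ = (D - a) / D := by rw [h1, one_div_div]
    _ = 1 - a / D := by rw [sub_div, div_self hD.ne']

lemma prod_bounds (L K : ℕ) (h : 2 * K ≤ L) :
    Real.exp (-(((K : ℝ) ^ 2 - K) / (2 * ((L : ℝ) - 2 * K + 1))))
        ≤ ∏ i ∈ Finset.range K, (((L : ℝ) - K - i) / ((L : ℝ) - 2 * i - 1))
    ∧ ∏ i ∈ Finset.range K, (((L : ℝ) - K - i) / ((L : ℝ) - 2 * i - 1))
        ≤ Real.exp (-(((K : ℝ) ^ 2 - K) / (2 * ((L : ℝ) - 1)))) := by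
  rcases Nat.eq_zero_or_pos K with rfl | hK
  · norm_num
  have hL2 : (2 : ℝ) * K ≤ L := by exact_mod_cast h
  have hK1 : (1 : ℝ) ≤ K := by exact_mod_cast hK
  have hiK : ∀ i ∈ Finset.range K, (i : ℝ) ≤ (K : ℝ) - 1 := by
    intro i hi
    have h' : i + 1 ≤ K := Finset.mem_range.mp hi
    have : (i : ℝ) + 1 ≤ K := by exact_mod_cast h'
    linarith
  have ha : ∀ i ∈ Finset.range K, (0 : ℝ) ≤ (K : ℝ) - 1 - i := by
    intro i hi; have := hiK i hi; linarith
  have hD : ∀ i ∈ Finset.range K, (1 : ℝ) ≤ (L : ℝ) - 2 * i - 1 := by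
    intro i hi; have := hiK i hi; linarith
  have haD : ∀ i ∈ Finset.range K, ((K : ℝ) - 1 - i) < (L : ℝ) - 2 * i - 1 := by
    intro i hi; have := hiK i hi; linarith
  have hfac : ∀ i ∈ Finset.range K,
      ((L : ℝ) - K - i) / ((L : ℝ) - 2 * i - 1)
        = 1 - ((K : ℝ) - 1 - i) / ((L : ℝ) - 2 * i - 1) := by
    intro i hi
    have hDi := hD i hi
    rw [eq_sub_iff_add_eq, ← add_div, div_eq_one_iff_eq (by linarith)]
    ring
  rw [Finset.prod_congr rfl hfac]
  have hCsum : ∀ M : ℝ, (0 : ℝ) < M →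
      ∑ i ∈ Finset.range K, ((K : ℝ) - 1 - i) / M = ((K : ℝ) ^ 2 - K) / (2 * M) := by
    intro M hM
    rw [← Finset.sum_div, sum_a, div_div]
  constructor
  · have hM : (0 : ℝ) < (L : ℝ) - 2 * K + 1 := by linarith
    calc Real.exp (-(((K : ℝ) ^ 2 - K) / (2 * ((L : ℝ) - 2 * K + 1))))
        ≤ Real.exp (-∑ i ∈ Finset.range K,
            ((K : ℝ) - 1 - i) / (((L : ℝ) - 2 * i - 1) - ((K : ℝ) - 1 - i))) := by
          apply Real.exp_le_exp.2
          rw [neg_le_neg_iff]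
          calc ∑ i ∈ Finset.range K,
              ((K : ℝ) - 1 - i) / (((L : ℝ) - 2 * i - 1) - ((K : ℝ) - 1 - i))
              ≤ ∑ i ∈ Finset.range K, ((K : ℝ) - 1 - i) / ((L : ℝ) - 2 * K + 1) := by
                apply Finset.sum_le_sum
                intro i hi
                have h1 := ha i hi
                have h2 := hiK i hi
                apply div_le_div_of_nonneg_left h1 hM (by linarith)
            _ = ((K : ℝ) ^ 2 - K) / (2 * ((L : ℝ) - 2 * K + 1)) := hCsum _ hM
      _ = ∏ i ∈ Finset.range K,
            Real.exp (-(((K : ℝ) - 1 - i) / (((L : ℝ) - 2 * i - 1) - ((K : ℝ) - 1 - i)))) := by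
          rw [← Real.exp_sum, Finset.sum_neg_distrib]
      _ ≤ ∏ i ∈ Finset.range K, (1 - ((K : ℝ) - 1 - i) / ((L : ℝ) - 2 * i - 1)) := by
          apply Finset.prod_le_prod
          · intro i _; positivity
          · intro i hi
            exact fact_lower (ha i hi) (haD i hi)
  · have hM : (0 : ℝ) < (L : ℝ) - 1 := by linarith
    calc ∏ i ∈ Finset.range K, (1 - ((K : ℝ) - 1 - i) / ((L : ℝ) - 2 * i - 1))
        ≤ ∏ i ∈ Finset.range K,
            Real.exp (-(((K : ℝ) - 1 - i) / ((L : ℝ) - 2 * i - 1))) := by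
          apply Finset.prod_le_prod
          · intro i hi
            have h1 := ha i hi
            have h2 := hD i hi
            have h3 := haD i hi
            have : ((K : ℝ) - 1 - i) / ((L : ℝ) - 2 * i - 1) ≤ 1 :=
              (div_le_one (by linarith)).2 (by linarith)
            linarith
          · intro i _
            exact fact_upper _
      _ = Real.exp (-∑ i ∈ Finset.range K,
            ((K : ℝ) - 1 - i) / ((L : ℝ) - 2 * i - 1)) := by
          rw [← Real.exp_sum, Finset.sum_neg_distrib]
      _ ≤ Real.exp (-(((K : ℝ) ^ 2 - K) / (2 * ((L : ℝ) - 1)))) := by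
          apply Real.exp_le_exp.2
          rw [neg_le_neg_iff]
          calc ((K : ℝ) ^ 2 - K) / (2 * ((L : ℝ) - 1))
              = ∑ i ∈ Finset.range K, ((K : ℝ) - 1 - i) / ((L : ℝ) - 1) :=
                (hCsum _ hM).symm
            _ ≤ ∑ i ∈ Finset.range K, ((K : ℝ) - 1 - i) / ((L : ℝ) - 2 * i - 1) := by
                apply Finset.sum_le_sum
                intro i hi
                have h1 := ha i hi
                have h2 := hD i hi
                apply div_le_div_of_nonneg_left h1 (by linarith) (by
                  have : (0:ℝ) ≤ (i:ℝ) := Nat.cast_nonneg i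
                  linarith)

lemma aux_limit (L K : ℕ → ℕ) (hKL : ∀ n, 2 * K n ≤ L n) (c d lam : ℝ) (hlam : 0 ≤ lam)
    (h1 : Tendsto (fun n => (K n : ℝ) ^ 2 / (L n : ℝ)) atTop (nhds lam))
    (h2 : Tendsto (fun n => (K n : ℝ) / (L n : ℝ)) atTop (nhds 0)) :
    Tendsto (fun n => ((K n : ℝ) ^ 2 - K n) / (2 * ((L n : ℝ) - c * K n + d)))
      atTop (nhds (lam / 2)) := by
  have hnum : ∀ n, (0 : ℝ) ≤ (K n : ℝ) ^ 2 - K n := by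
    intro n
    have h' : K n ≤ K n ^ 2 := Nat.le_self_pow two_ne_zero _
    have : (K n : ℝ) ≤ (K n : ℝ) ^ 2 := by exact_mod_cast h'
    linarith
  rcases eq_or_lt_of_le hlam with rfl | hpos
  · rw [zero_div]
    have hev : ∀ᶠ n in atTop, K n = 0 ∨
        ((8 * (|c| + |d| + 1) ≤ (L n : ℝ)) ∧ c * K n ≤ (L n : ℝ) / 4) := by
      have hsmall : ∀ᶠ n in atTop, (K n : ℝ) / (L n : ℝ) < 1 / (8 * (|c| + |d| + 1)) :=
        h2.eventually_lt_const (by positivity)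
      filter_upwards [hsmall] with n hn
      rcases Nat.eq_zero_or_pos (K n) with h0 | hKpos
      · exact Or.inl h0
      · right
        have hLpos : 0 < L n := by have := hKL n; omega
        have hLr : (0 : ℝ) < L n := by exact_mod_cast hLpos
        have hKr : (1 : ℝ) ≤ K n := by exact_mod_cast hKpos
        have hB : (0 : ℝ) < 8 * (|c| + |d| + 1) := by positivity
        have hinv : 1 / (L n : ℝ) ≤ (K n : ℝ) / (L n : ℝ) := by gcongr
        have h3 : 1 / (L n : ℝ) < 1 / (8 * (|c| + |d| + 1)) := lt_of_le_of_lt hinv hn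
        have hL8 : 8 * (|c| + |d| + 1) ≤ (L n : ℝ) :=
          (lt_of_one_div_lt_one_div hLr h3).le
        refine ⟨hL8, ?_⟩
        have hKL' : (K n : ℝ) ≤ (L n : ℝ) / (8 * (|c| + |d| + 1)) := by
          rw [div_lt_div_iff₀ hLr hB] at hn
          rw [le_div_iff₀ hB]
          linarith
        have h1' : c * K n ≤ |c| * K n :=
          mul_le_mul_of_nonneg_right (le_abs_self c) (Nat.cast_nonneg _)
        have h2' : |c| * (K n : ℝ) ≤ |c| * ((L n : ℝ) / (8 * (|c| + |d| + 1))) :=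
          mul_le_mul_of_nonneg_left hKL' (abs_nonneg c)
        have h3' : |c| * ((L n : ℝ) / (8 * (|c| + |d| + 1))) ≤ (L n : ℝ) / 4 := by
          calc |c| * ((L n : ℝ) / (8 * (|c| + |d| + 1)))
              ≤ (|c| + |d| + 1) * ((L n : ℝ) / (8 * (|c| + |d| + 1))) := by
                apply mul_le_mul_of_nonneg_right (by linarith [abs_nonneg d])
                positivity
            _ = (L n : ℝ) / 8 := by field_simp
            _ ≤ (L n : ℝ) / 4 :=
                div_le_div_of_nonneg_left hLr.le (by norm_num) (by norm_num)
        linarith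
    have hbound : ∀ᶠ n in atTop,
        (0 : ℝ) ≤ ((K n : ℝ) ^ 2 - K n) / (2 * ((L n : ℝ) - c * K n + d))
        ∧ ((K n : ℝ) ^ 2 - K n) / (2 * ((L n : ℝ) - c * K n + d))
            ≤ 2 * ((K n : ℝ) ^ 2 / (L n : ℝ)) := by
      filter_upwards [hev] with n hn
      rcases hn with h0 | hLcK
      · constructor <;> simp [h0]
      · obtain ⟨hL8, hcK⟩ := hLcK
        have hBL : (0:ℝ) < 8 * (|c| + |d| + 1) := by positivity
        have hLr : (0 : ℝ) < L n := by linarith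
        have hdabs : -(|d|) ≤ d := neg_abs_le d
        have hd8 : |d| ≤ (L n : ℝ) / 8 := by
          rw [le_div_iff₀ (by norm_num : (0:ℝ) < 8)]
          linarith [abs_nonneg c]
        have hden : (L n : ℝ) / 2 ≤ 2 * ((L n : ℝ) - c * K n + d) := by
          rw [le_div_iff₀ (by norm_num : (0:ℝ) < 8)] at hd8
          nlinarith
        have hdenpos : (0 : ℝ) < 2 * ((L n : ℝ) - c * K n + d) := by
          have : (0:ℝ) < (L n : ℝ) / 2 := by positivity
          linarith
        refine ⟨div_nonneg (hnum n) hdenpos.le, ?_⟩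
        calc ((K n : ℝ) ^ 2 - K n) / (2 * ((L n : ℝ) - c * K n + d))
            ≤ (K n : ℝ) ^ 2 / ((L n : ℝ) / 2) :=
              div_le_div₀ (by positivity)
                (sub_le_self _ (Nat.cast_nonneg (K n))) (by positivity) hden
          _ = 2 * ((K n : ℝ) ^ 2 / (L n : ℝ)) := by
              rw [div_div_eq_mul_div, mul_comm ((K n : ℝ) ^ 2) 2, mul_div_assoc]
    apply tendsto_of_tendsto_of_tendsto_of_le_of_le' tendsto_const_nhds
      (by simpa using h1.const_mul 2)
    · filter_upwards [hbound] with n hn using hn.1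
    · filter_upwards [hbound] with n hn using hn.2
  · have hK1 : ∀ᶠ n in atTop, 1 ≤ K n ∧ 0 < L n := by
      have := h1.eventually_const_lt (show lam / 2 < lam by linarith)
      filter_upwards [this] with n hn
      rcases Nat.eq_zero_or_pos (K n) with h0 | hKpos
      · exfalso
        rw [h0] at hn
        norm_num at hn
        linarith
      · exact ⟨hKpos, by have := hKL n; omega⟩
    have hLtop : Tendsto (fun n => (L n : ℝ)) atTop atTop := by
      rw [tendsto_atTop]
      intro b
      have hsmall : ∀ᶠ n in atTop, (K n : ℝ) / (L n : ℝ) < 1 / (|b| + 1) :=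
        h2.eventually_lt_const (by positivity)
      filter_upwards [hsmall, hK1] with n hn hkl
      obtain ⟨hk, hl⟩ := hkl
      have hLr : (0 : ℝ) < L n := by exact_mod_cast hl
      have hKr : (1 : ℝ) ≤ K n := by exact_mod_cast hk
      have hinv : 1 / (L n : ℝ) ≤ (K n : ℝ) / (L n : ℝ) := by gcongr
      have h3 : 1 / (L n : ℝ) < 1 / (|b| + 1) := lt_of_le_of_lt hinv hn
      have h4 := lt_of_one_div_lt_one_div hLr h3
      have := le_abs_self b
      linarith
    have hinvL : Tendsto (fun n => ((L n : ℝ))⁻¹) atTop (nhds 0) :=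
      tendsto_inv_atTop_zero.comp hLtop
    have hinner : Tendsto (fun n => (2 * ((L n : ℝ) - c * K n + d)) / (L n : ℝ))
        atTop (nhds 2) := by
      have heq : ∀ᶠ n in atTop,
          2 - 2 * c * ((K n : ℝ) / (L n : ℝ)) + 2 * d * ((L n : ℝ))⁻¹
            = (2 * ((L n : ℝ) - c * K n + d)) / (L n : ℝ) := by
        filter_upwards [hK1] with n hkl
        have hLr : (L n : ℝ) ≠ 0 := Nat.cast_ne_zero.mpr hkl.2.ne'
        field_simp
      have hlim : Tendsto
          (fun n => 2 - 2 * c * ((K n : ℝ) / (L n : ℝ)) + 2 * d * ((L n : ℝ))⁻¹)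
          atTop (nhds (2 - 2 * c * 0 + 2 * d * 0)) :=
        (tendsto_const_nhds.sub (h2.const_mul (2 * c))).add (hinvL.const_mul (2 * d))
      rw [show (2 : ℝ) - 2 * c * 0 + 2 * d * 0 = 2 by ring] at hlim
      exact Tendsto.congr' heq hlim
    have hG2 : Tendsto (fun n => (L n : ℝ) / (2 * ((L n : ℝ) - c * K n + d)))
        atTop (nhds 2⁻¹) := by
      have := hinner.inv₀ two_ne_zero
      exact this.congr fun n => inv_div _ _
    have hG1 : Tendsto (fun n => ((K n : ℝ) ^ 2 - K n) / (L n : ℝ))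
        atTop (nhds lam) := by
      have h := h1.sub h2
      rw [sub_zero] at h
      exact h.congr fun n => (sub_div _ _ _).symm
    have hmul := hG1.mul hG2
    have heq : ∀ᶠ n in atTop,
        (((K n : ℝ) ^ 2 - K n) / (L n : ℝ)) * ((L n : ℝ) / (2 * ((L n : ℝ) - c * K n + d)))
          = ((K n : ℝ) ^ 2 - K n) / (2 * ((L n : ℝ) - c * K n + d)) := by
      filter_upwards [hK1] with n hkl
      have hLr : (L n : ℝ) ≠ 0 := Nat.cast_ne_zero.mpr hkl.2.ne'
      rw [div_mul_div_comm, mul_comm ((K n : ℝ) ^ 2 - K n) (L n : ℝ),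
        mul_div_mul_left _ _ hLr]
    have hfin := Tendsto.congr' heq hmul
    rwa [← div_eq_mul_inv] at hfin

/-- In a uniform pairing of `ℓ_n` (even) half-edges among which `n₁` are degree-1
half-edges, the probability that no two degree-1 half-edges are paired together equals
`∏_{i=1}^{n₁} (ℓ_n - n₁ - i + 1)/(ℓ_n - 2i + 1)`; if `n₁²/ℓ_n → λ` and `n₁/ℓ_n → 0`,
this probability converges to `e^{-λ/2}`. -/
theorem no_line_of_length_two_probability
    (ℓ n₁ : ℕ → ℕ) (heven : ∀ n, Even (ℓ n)) (hle : ∀ n, 2 * n₁ n ≤ ℓ n)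
    (lam : ℝ) (hlam : 0 ≤ lam)
    (h1 : Tendsto (fun n => (n₁ n : ℝ) ^ 2 / (ℓ n : ℝ)) atTop (nhds lam))
    (h2 : Tendsto (fun n => (n₁ n : ℝ) / (ℓ n : ℝ)) atTop (nhds 0)) :
    (∀ n : ℕ,
      (Nat.card {f : Equiv.Perm (Fin (ℓ n)) // IsPairing f ∧ NoDegreeOnePair (n₁ n) f} : ℝ)
          / (Nat.card {f : Equiv.Perm (Fin (ℓ n)) // IsPairing f} : ℝ)
        = ∏ i ∈ Finset.range (n₁ n),
            (((ℓ n : ℝ) - n₁ n - i) / ((ℓ n : ℝ) - 2 * i - 1))) ∧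
    Tendsto (fun n =>
      (Nat.card {f : Equiv.Perm (Fin (ℓ n)) // IsPairing f ∧ NoDegreeOnePair (n₁ n) f} : ℝ)
          / (Nat.card {f : Equiv.Perm (Fin (ℓ n)) // IsPairing f} : ℝ))
      atTop (nhds (Real.exp (-lam / 2))) := by
  have hnum : ∀ n,
      Nat.card {f : Equiv.Perm (Fin (ℓ n)) // IsPairing f ∧ NoDegreeOnePair (n₁ n) f}
        = cnt (ℓ n) (n₁ n) := by
    intro n
    rw [cnt_def]
    apply Nat.card_congr
    apply Equiv.subtypeEquivRight
    intro f
    constructor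
    · rintro ⟨⟨hf1, hf2⟩, hf3⟩; exact ⟨hf1, hf2, hf3⟩
    · rintro ⟨hf1, hf2, hf3⟩; exact ⟨⟨hf1, hf2⟩, hf3⟩
  have hden : ∀ n,
      Nat.card {f : Equiv.Perm (Fin (ℓ n)) // IsPairing f} = cnt (ℓ n) 0 := by
    intro n
    rw [cnt_def]
    apply Nat.card_congr
    apply Equiv.subtypeEquivRight
    intro f
    constructor
    · rintro ⟨hf1, hf2⟩; exact ⟨hf1, hf2, fun x hx => absurd hx (Nat.not_lt_zero _)⟩
    · rintro ⟨hf1, hf2, _⟩; exact ⟨hf1, hf2⟩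
  have hpart1 : ∀ n : ℕ,
      (Nat.card {f : Equiv.Perm (Fin (ℓ n)) // IsPairing f ∧ NoDegreeOnePair (n₁ n) f} : ℝ)
          / (Nat.card {f : Equiv.Perm (Fin (ℓ n)) // IsPairing f} : ℝ)
        = ∏ i ∈ Finset.range (n₁ n),
            (((ℓ n : ℝ) - n₁ n - i) / ((ℓ n : ℝ) - 2 * i - 1)) := by
    intro n
    rw [hnum n, hden n]
    exact cnt_ratio (n₁ n) (ℓ n) (heven n) (hle n)
  refine ⟨hpart1, ?_⟩
  have hlow := aux_limit ℓ n₁ hle 2 1 lam hlam h1 h2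
  have hupp0 := aux_limit ℓ n₁ hle 0 (-1) lam hlam h1 h2
  have hupp : Tendsto (fun n => ((n₁ n : ℝ) ^ 2 - n₁ n) / (2 * ((ℓ n : ℝ) - 1)))
      atTop (nhds (lam / 2)) := by
    apply hupp0.congr
    intro n
    ring_nf
  have hexplow : Tendsto (fun n =>
      Real.exp (-(((n₁ n : ℝ) ^ 2 - n₁ n) / (2 * ((ℓ n : ℝ) - 2 * n₁ n + 1)))))
      atTop (nhds (Real.exp (-(lam / 2)))) :=
    (Real.continuous_exp.tendsto _).comp hlow.neg
  have hexpupp : Tendsto (fun n =>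
      Real.exp (-(((n₁ n : ℝ) ^ 2 - n₁ n) / (2 * ((ℓ n : ℝ) - 1)))))
      atTop (nhds (Real.exp (-(lam / 2)))) :=
    (Real.continuous_exp.tendsto _).comp hupp.neg
  have hT : Tendsto (fun n => ∏ i ∈ Finset.range (n₁ n),
      (((ℓ n : ℝ) - n₁ n - i) / ((ℓ n : ℝ) - 2 * i - 1)))
      atTop (nhds (Real.exp (-(lam / 2)))) := by
    apply tendsto_of_tendsto_of_tendsto_of_le_of_le hexplow hexpupp
    · intro n
      exact (prod_bounds (ℓ n) (n₁ n) (hle n)).1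
    · intro n
      exact (prod_bounds (ℓ n) (n₁ n) (hle n)).2
  rw [show -lam / 2 = -(lam / 2) by ring]
  exact hT.congr fun n => (hpart1 n).symm
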